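/- Let (X_n, Y_n) be i.i.d. pairs and (M_n) a sequence of measurable functions M_n : ℝ^{2n} → [0,∞) adapted to 𝓕_n = σ(X_i, Y_i, i ≤ n). Suppose that for every product distribution P = P_X ⊗ P_Y (i.e. every P under which X and Y are independent), the process (M_n(X_1,…,X_n,Y_1,…,Y_n)) is a supermartingale. Then for every n and all vectors x ∈ ℝ^{n+1}, y ∈ ℝ^{n+1}, M_n(x_1,…,x_n, y_1,…,y_n) ≥ M_{n+1}(x_1,…,x_{n+1}, y_1,…,y_{n+1}). In particular M_n ≤ M_0 pointwise, so no such test martingale can ever exceed its initial value. -/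

import Mathlib

open MeasureTheory ProbabilityTheory
open scoped ENNReal

lemma integrable_of_finsupport {α : Type*} [MeasurableSpace α] [MeasurableSingletonClass α]
    (P : Measure α) [IsFiniteMeasure P] (s : Finset α) (hs : P (((s : Set α))ᶜ) = 0)
    (f : α → ℝ) : Integrable f P := by
  have h : P.restrict s = P :=
    Measure.restrict_eq_self_of_ae_mem (by rw [ae_iff]; exact hs)
  rw [← h]
  exact IntegrableOn.finset

lemma prop_of_atom {α : Type*} [MeasurableSpace α] {P : Measure α} {Q : α → Prop}
    (h : ∀ᵐ q ∂P, Q q) {p : α} (hp : P {p} ≠ 0) : Q p := by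
  by_contra hc
  exact hp (measure_mono_null (Set.singleton_subset_iff.2 hc) (ae_iff.1 h))

noncomputable def testMeasure (n : ℕ) (v : Fin (n + 1) → ℝ) (e : ℝ≥0∞) : Measure ℝ :=
  (1 - e) • Measure.dirac (v (Fin.last n)) +
    (e / (n + 1)) • ∑ i : Fin (n + 1), Measure.dirac (v i)

lemma testMeasure_apply (n : ℕ) (v : Fin (n + 1) → ℝ) (e : ℝ≥0∞) {s : Set ℝ}
    (hs : MeasurableSet s) :
    testMeasure n v e s =
      (1 - e) * s.indicator 1 (v (Fin.last n)) +
        (e / (n + 1)) * ∑ i : Fin (n + 1), s.indicator 1 (v i) := by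
  simp [testMeasure, Measure.add_apply, Measure.smul_apply, Measure.finset_sum_apply,
    Measure.dirac_apply, smul_eq_mul]

lemma testMeasure_prob (n : ℕ) (v : Fin (n + 1) → ℝ) {e : ℝ≥0∞} (he : e ≤ 1) :
    IsProbabilityMeasure (testMeasure n v e) := by
  constructor
  rw [testMeasure_apply n v e MeasurableSet.univ]
  simp only [Set.indicator_univ, Pi.one_apply, mul_one, Finset.sum_const, Finset.card_univ,
    Fintype.card_fin, nsmul_eq_mul]
  have h1 : e / ((n : ℝ≥0∞) + 1) * ((n : ℝ≥0∞) + 1) = e :=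
    ENNReal.div_mul_cancel (by simp) (by simp)
  push_cast
  rw [h1, tsub_add_cancel_of_le he]

lemma testMeasure_singleton_le (n : ℕ) (v : Fin (n + 1) → ℝ) (e : ℝ≥0∞) (j : Fin (n + 1)) :
    e / (n + 1) ≤ testMeasure n v e {v j} := by
  rw [testMeasure_apply n v e (measurableSet_singleton _)]
  calc e / (n + 1) = (e / (n + 1)) * ({v j} : Set ℝ).indicator 1 (v j) := by simp
    _ ≤ (e / (n + 1)) * ∑ i : Fin (n + 1), ({v j} : Set ℝ).indicator 1 (v i) :=
        mul_le_mul_right (Finset.single_le_sum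
          (f := fun i => ({v j} : Set ℝ).indicator (1 : ℝ → ℝ≥0∞) (v i))
          (fun i _ => zero_le) (Finset.mem_univ j)) _
    _ ≤ _ := le_add_self

lemma testMeasure_last_le (n : ℕ) (v : Fin (n + 1) → ℝ) (e : ℝ≥0∞) :
    1 - e ≤ testMeasure n v e {v (Fin.last n)} := by
  rw [testMeasure_apply n v e (measurableSet_singleton _)]
  calc 1 - e = (1 - e) * ({v (Fin.last n)} : Set ℝ).indicator 1 (v (Fin.last n)) := by simp
    _ ≤ _ := self_le_add_right _ _

lemma testMeasure_compl (n : ℕ) (v : Fin (n + 1) → ℝ) (e : ℝ≥0∞) :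
    testMeasure n v e (((Finset.image v Finset.univ : Finset ℝ) : Set ℝ)ᶜ) = 0 := by
  rw [testMeasure_apply n v e (Finset.image v Finset.univ).measurableSet.compl]
  have h : ∀ i : Fin (n + 1),
      (((Finset.image v Finset.univ : Finset ℝ) : Set ℝ)ᶜ).indicator
        (1 : ℝ → ℝ≥0∞) (v i) = 0 := by
    intro i
    apply Set.indicator_of_notMem
    simp
  simp [h (Fin.last n), h]

lemma key_step
    (M : (n : ℕ) → (Fin n → ℝ) → (Fin n → ℝ) → ℝ)
    (hnonneg : ∀ n x y, 0 ≤ M n x y)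
    (hsuper : ∀ (μ ν : Measure ℝ), IsProbabilityMeasure μ → IsProbabilityMeasure ν →
      ∀ n : ℕ,
        ∀ᵐ p : (Fin n → ℝ) × (Fin n → ℝ)
            ∂((Measure.pi fun _ : Fin n => μ).prod (Measure.pi fun _ : Fin n => ν)),
          ∫ z : ℝ × ℝ, M (n + 1) (Fin.snoc p.1 z.1) (Fin.snoc p.2 z.2) ∂(μ.prod ν) ≤
            M n p.1 p.2)
    (n : ℕ) (x y : Fin (n + 1) → ℝ) (ε : ℝ) (hε0 : 0 < ε) (hε1 : ε ≤ 1) :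
    (1 - ε) ^ 2 * M (n + 1) x y ≤
      M n (fun i => x i.castSucc) (fun i => y i.castSucc) := by
  set e := ENNReal.ofReal ε with he_def
  have he1 : e ≤ 1 := ENNReal.ofReal_le_one.2 hε1
  have he0 : e ≠ 0 := by simp [he_def, ENNReal.ofReal_eq_zero, not_le, hε0]
  have hμp : IsProbabilityMeasure (testMeasure n x e) := testMeasure_prob n x he1
  have hνp : IsProbabilityMeasure (testMeasure n y e) := testMeasure_prob n y he1
  set μ := testMeasure n x e with hμdef
  set ν := testMeasure n y e with hνdef
  set x' : Fin n → ℝ := fun i => x i.castSucc with hx'def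
  set y' : Fin n → ℝ := fun i => y i.castSucc with hy'def
  have hdiv : e / ((n : ℝ≥0∞) + 1) ≠ 0 := ENNReal.div_ne_zero.2 ⟨he0, by simp⟩
  -- positive mass on the past point
  have hpix : (Measure.pi fun _ : Fin n => μ) {x'} ≠ 0 := by
    rw [← Set.univ_pi_singleton, Measure.pi_pi, Finset.prod_ne_zero_iff]
    intro i _ h
    have h2 := testMeasure_singleton_le n x e i.castSucc
    rw [← hμdef, show x i.castSucc = x' i from rfl, h] at h2
    exact hdiv (le_zero_iff.1 h2)
  have hpiy : (Measure.pi fun _ : Fin n => ν) {y'} ≠ 0 := by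
    rw [← Set.univ_pi_singleton, Measure.pi_pi, Finset.prod_ne_zero_iff]
    intro i _ h
    have h2 := testMeasure_singleton_le n y e i.castSucc
    rw [← hνdef, show y i.castSucc = y' i from rfl, h] at h2
    exact hdiv (le_zero_iff.1 h2)
  have hne : ((Measure.pi fun _ : Fin n => μ).prod (Measure.pi fun _ : Fin n => ν))
      {((x', y') : (Fin n → ℝ) × (Fin n → ℝ))} ≠ 0 := by
    rw [← Set.singleton_prod_singleton, Measure.prod_prod]
    exact mul_ne_zero hpix hpiy
  have hsing :
      ∫ z : ℝ × ℝ, M (n + 1) (Fin.snoc x' z.1) (Fin.snoc y' z.2) ∂(μ.prod ν) ≤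
        M n x' y' :=
    prop_of_atom (hsuper μ ν hμp hνp n) hne
  -- integrability of the one-step function
  set f : ℝ × ℝ → ℝ := fun z => M (n + 1) (Fin.snoc x' z.1) (Fin.snoc y' z.2) with hfdef
  set S : Finset ℝ := Finset.image x Finset.univ with hSdef
  set T : Finset ℝ := Finset.image y Finset.univ with hTdef
  have hST : (μ.prod ν) ((↑(S ×ˢ T) : Set (ℝ × ℝ))ᶜ) = 0 := by
    have hsub : (↑(S ×ˢ T) : Set (ℝ × ℝ))ᶜ ⊆
        ((↑S : Set ℝ)ᶜ ×ˢ (Set.univ : Set ℝ)) ∪ ((Set.univ : Set ℝ) ×ˢ (↑T : Set ℝ)ᶜ) := by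
      intro p hp
      simp only [Finset.coe_product, Set.mem_compl_iff, Set.mem_prod, Set.mem_union,
        Set.mem_univ, and_true, true_and] at hp ⊢
      tauto
    refine measure_mono_null hsub (measure_union_null ?_ ?_)
    · rw [Measure.prod_prod]
      have : μ ((↑S : Set ℝ)ᶜ) = 0 := by rw [hμdef, hSdef]; exact testMeasure_compl n x e
      simp [this]
    · rw [Measure.prod_prod]
      have : ν ((↑T : Set ℝ)ᶜ) = 0 := by rw [hνdef, hTdef]; exact testMeasure_compl n y e
      simp [this]
  have h_int : Integrable f (μ.prod ν) := integrable_of_finsupport _ (S ×ˢ T) hST f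
  -- evaluate at the new point
  have hx : Fin.snoc x' (x (Fin.last n)) = x := Fin.snoc_init_self x
  have hy : Fin.snoc y' (y (Fin.last n)) = y := Fin.snoc_init_self y
  set pt : ℝ × ℝ := (x (Fin.last n), y (Fin.last n)) with hptdef
  have hpt : f pt = M (n + 1) x y := by rw [hfdef]; simp only [hptdef]; rw [hx, hy]
  have hle1 : ∫ z in ({pt} : Set (ℝ × ℝ)), f z ∂(μ.prod ν) ≤ ∫ z, f z ∂(μ.prod ν) :=
    setIntegral_le_integral h_int (Filter.Eventually.of_forall fun z => hnonneg _ _ _)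
  rw [integral_singleton] at hle1
  have hmass : ENNReal.ofReal ((1 - ε) ^ 2) ≤ (μ.prod ν) {pt} := by
    have h1e : ENNReal.ofReal (1 - ε) = 1 - e := by
      rw [he_def, ENNReal.ofReal_sub _ hε0.le, ENNReal.ofReal_one]
    have : (μ.prod ν) {pt} = μ {x (Fin.last n)} * ν {y (Fin.last n)} := by
      rw [hptdef, ← Set.singleton_prod_singleton, Measure.prod_prod]
    rw [this, sq, ENNReal.ofReal_mul (by linarith), h1e]
    exact mul_le_mul' (testMeasure_last_le n x e) (testMeasure_last_le n y e)
  have htr : (1 - ε) ^ 2 ≤ ((μ.prod ν) {pt}).toReal := by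
    rw [← ENNReal.toReal_ofReal (by positivity : (0 : ℝ) ≤ (1 - ε) ^ 2)]
    exact ENNReal.toReal_mono (measure_ne_top _ _) hmass
  calc (1 - ε) ^ 2 * M (n + 1) x y
      ≤ ((μ.prod ν) {pt}).toReal * M (n + 1) x y :=
        mul_le_mul_of_nonneg_right htr (hnonneg _ _ _)
    _ = ((μ.prod ν) {pt}).toReal • f pt := by rw [hpt, smul_eq_mul]
    _ ≤ ∫ z, f z ∂(μ.prod ν) := hle1
    _ ≤ M n x' y' := hsing



/-- **Impossibility of test martingales for independence.**
Let `M n : ℝⁿ × ℝⁿ → [0,∞)` be measurable functions of the first `n`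
observations.  Suppose that for every pair of probability measures `μ, ν` on `ℝ`
(so that the pairs `(Xᵢ, Yᵢ)` are i.i.d. with `X ⟂ Y`, i.e. `P = (μ ⊗ ν)^⊗∞`),
the process `M n (X₁,…,Xₙ, Y₁,…,Yₙ)` is a supermartingale; this is expressed by
the conditional-expectation inequality: for `(μ^⊗ⁿ ⊗ ν^⊗ⁿ)`-almost every
`(x, y)`, the expected next value `∫ M (n+1) (x ⧺ s, y ⧺ t) d(μ ⊗ ν)(s,t)` is at
most `M n (x, y)`.  Then `M` is pointwise non-increasing, and in particular
never exceeds its initial value. -/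
theorem no_test_martingale_for_independence
    (M : (n : ℕ) → (Fin n → ℝ) → (Fin n → ℝ) → ℝ)
    (hmeas : ∀ n, Measurable (fun p : (Fin n → ℝ) × (Fin n → ℝ) => M n p.1 p.2))
    (hnonneg : ∀ n x y, 0 ≤ M n x y)
    (hsuper : ∀ (μ ν : Measure ℝ), IsProbabilityMeasure μ → IsProbabilityMeasure ν →
      ∀ n : ℕ,
        ∀ᵐ p : (Fin n → ℝ) × (Fin n → ℝ)
            ∂((Measure.pi fun _ : Fin n => μ).prod (Measure.pi fun _ : Fin n => ν)),
          ∫ z : ℝ × ℝ, M (n + 1) (Fin.snoc p.1 z.1) (Fin.snoc p.2 z.2) ∂(μ.prod ν) ≤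
            M n p.1 p.2) :
    (∀ (n : ℕ) (x y : Fin (n + 1) → ℝ),
      M (n + 1) x y ≤ M n (fun i => x i.castSucc) (fun i => y i.castSucc)) ∧
    (∀ (n : ℕ) (x y : Fin n → ℝ), M n x y ≤ M 0 (fun i => i.elim0) (fun i => i.elim0)) := by
  have main : ∀ (n : ℕ) (x y : Fin (n + 1) → ℝ),
      M (n + 1) x y ≤ M n (fun i => x i.castSucc) (fun i => y i.castSucc) := by
    intro n x y
    set C := M (n + 1) x y with hC
    set D := M n (fun i => x i.castSucc) (fun i => y i.castSucc) with hD
    by_contra hlt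
    push_neg at hlt
    have hD0 : 0 ≤ D := hnonneg _ _ _
    have hC0 : 0 < C := lt_of_le_of_lt hD0 hlt
    set ε : ℝ := (C - D) / (2 * C) with hε
    have hε0 : 0 < ε := div_pos (by linarith) (by linarith)
    have hε1 : ε ≤ 1 := by
      rw [hε, div_le_one (by linarith)]
      linarith
    have hkey := key_step M hnonneg hsuper n x y ε hε0 hε1
    rw [← hC, ← hD] at hkey
    have hεC : ε * (2 * C) = C - D := by
      rw [hε, div_mul_cancel₀]
      linarith
    nlinarith [sq_nonneg ε, mul_pos (mul_pos hε0 hε0) hC0]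
  refine ⟨main, ?_⟩
  intro n
  induction n with
  | zero =>
      intro x y
      have hx : x = fun i => i.elim0 := funext fun i => i.elim0
      have hy : y = fun i => i.elim0 := funext fun i => i.elim0
      rw [hx, hy]
  | succ n ih =>
      intro x y
      exact le_trans (main n x y) (ih _ _)
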